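/- Let R be a commutative ring, let e ∈ R satisfy e * e = e, let x, y ∈ R, and let f ∈ R[X] be a polynomial. Then f.eval (x + e * y) = f.eval x + e * (f.eval (x + y) - f.eval x). -/
import Mathlib

open Polynomial

lemma pow_add_idem_mul {R : Type*} [CommRing R] (e : R) (he : e * e = e)
    (x y : R) (n : ℕ) :
    (x + e * y) ^ n = x ^ n + e * ((x + y) ^ n - x ^ n) := by
  induction n with
  | zero => simp
  | succ n ih =>
    rw [pow_succ, ih]
    ring_nf
    rw [show e ^ 2 = e from by rw [sq, he]]
    ring

/-- Lemma 3.2, first identity: `f(x + e y) = f(x) + e (f(x+y) - f(x))`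
for an idempotent `e`. -/
theorem eval_add_idem_mul (R : Type*) [CommRing R] (e : R) (he : e * e = e)
    (x y : R) (f : R[X]) :
    f.eval (x + e * y) = f.eval x + e * (f.eval (x + y) - f.eval x) := by
  induction f using Polynomial.induction_on' with
  | add p q hp hq => simp [hp, hq]; ring
  | monomial n a => simp [pow_add_idem_mul e he x y n]; ring
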